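/- Let i ≥ 1 and k ≥ 2i+1. Then g(P_{2i+1}(u), P_{2i+3}(u), P_{2i+k+1}(u)) = g(P_{2i+1}(u), P_{2i+3}(u)) = P_{2i+1}(u)·P_{2i+3}(u) − P_{2i+1}(u) − P_{2i+3}(u). -/
import Mathlib

def pell (u : ℕ) : ℕ → ℕ
  | 0 => 0
  | 1 => 1
  | n + 2 => u * pell u (n + 1) + pell u n

lemma pell_pos (u : ℕ) (hu : 1 ≤ u) : ∀ n, 1 ≤ pell u (n + 1) := by
  intro n
  induction n using Nat.twoStepInduction with
  | zero => simp [pell]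
  | one => simp [pell]; nlinarith
  | more n ih _ =>
    show 1 ≤ u * pell u (n + 2) + pell u (n + 1)
    nlinarith
lemma pell_mono (u : ℕ) (hu : 1 ≤ u) : Monotone (pell u) := by
  apply monotone_nat_of_le_succ
  intro n
  match n with
  | 0 => simp [pell]
  | n + 1 =>
    show pell u (n + 1) ≤ u * pell u (n + 1) + pell u n
    nlinarith [Nat.le_mul_of_pos_left (pell u (n+1)) hu]

lemma pell_add (u m : ℕ) : ∀ n, pell u (m + n + 1)
    = pell u (m + 1) * pell u (n + 1) + pell u m * pell u n := by
  intro n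
  induction n using Nat.twoStepInduction with
  | zero => simp [pell]
  | one =>
    show pell u (m + 2) = pell u (m+1) * pell u 2 + pell u m * pell u 1
    simp [pell]; ring
  | more n ih1 ih2 =>
    have h1 : m + (n + 2) + 1 = (m + n + 1) + 2 := by ring
    have h2 : m + (n + 1) + 1 = (m + n + 1) + 1 := by ring
    rw [h1, show pell u ((m+n+1)+2) = u * pell u (m+n+1+1) + pell u (m+n+1) from rfl,
      ← h2, ih2, ih1]
    show _ = pell u (m+1) * (u * pell u (n+2) + pell u (n+1))
      + pell u m * (u * pell u (n+1) + pell u n)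
    ring

lemma pell_coprime_succ (u : ℕ) : ∀ n, Nat.Coprime (pell u n) (pell u (n + 1)) := by
  intro n
  induction n with
  | zero => simp [pell, Nat.Coprime]
  | succ n ih =>
    show Nat.Coprime (pell u (n+1)) (u * pell u (n + 1) + pell u n)
    rw [Nat.add_comm (u * pell u (n+1)) (pell u n), Nat.coprime_add_mul_right_right]
    exact ih.symm

lemma pell_coprime_u (u : ℕ) : ∀ n, Nat.Coprime (pell u (2 * n + 1)) u := by
  intro n
  induction n with
  | zero => simp [pell, Nat.Coprime]
  | succ n ih =>
    have : 2 * (n + 1) + 1 = (2 * n + 1) + 2 := by ring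
    rw [this]
    show Nat.Coprime (u * pell u (2*n+1+1) + pell u (2*n+1)) u
    rw [Nat.add_comm (u * pell u (2*n+1+1)) (pell u (2*n+1)),
      Nat.mul_comm u (pell u (2*n+1+1)), Nat.coprime_add_mul_right_left]
    exact ih

theorem stmt_15 (u : ℕ) (hu : 1 ≤ u) (i k : ℕ) (hi : 1 ≤ i) (hk : 2 * i + 1 ≤ k) :
    ∃ g : ℕ, IsGreatest {m : ℕ | ¬ ∃ x y z : ℕ,
        x * pell u (2 * i + 1) + y * pell u (2 * i + 3) + z * pell u (2 * i + k + 1) = m} g ∧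
      IsGreatest {m : ℕ | ¬ ∃ x y : ℕ,
        x * pell u (2 * i + 1) + y * pell u (2 * i + 3) = m} g ∧
      (g : ℤ) = (pell u (2 * i + 1) : ℤ) * pell u (2 * i + 3)
        - pell u (2 * i + 1) - pell u (2 * i + 3) := by
  set a := pell u (2 * i + 1) with ha
  set b := pell u (2 * i + 3) with hb
  set c := pell u (2 * i + k + 1) with hc
  -- basic facts
  have hmono := pell_mono u hu
  have ha2 : 2 ≤ a := by
    calc 2 ≤ pell u 3 := by
            show 2 ≤ u * pell u 2 + pell u 1
            show 2 ≤ u * (u * 1 + 0) + 1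
            nlinarith
      _ ≤ a := hmono (by omega)
  have hb2 : 2 ≤ b := le_trans ha2 (hmono (by omega))
  have hab : a + b ≤ a * b := Nat.add_le_mul ha2 hb2
  -- coprimality
  have hcop : Nat.Coprime a b := by
    have h1 : b = u * pell u (2 * i + 2) + a := rfl
    rw [h1, Nat.coprime_add_self_right]
    exact Nat.Coprime.mul_right ((pell_coprime_u u i).symm.symm) (pell_coprime_succ u (2*i+1))
  -- Frobenius for the pair
  have hfrob := frobeniusNumber_pair hcop ha2 hb2
  rw [FrobeniusNumber] at hfrob
  set g := a * b - a - b with hg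
  have hset : {m : ℕ | ¬ ∃ x y : ℕ, x * a + y * b = m}
      = {m : ℕ | m ∉ AddSubmonoid.closure ({a, b} : Set ℕ)} := by
    ext m
    simp only [Set.mem_setOf_eq, AddSubmonoid.mem_closure_pair, smul_eq_mul]
  have hpair : IsGreatest {m : ℕ | ¬ ∃ x y : ℕ, x * a + y * b = m} g := by
    rw [hset]; exact hfrob
  -- representability of c
  have hrep : ∃ p q : ℕ, p * a + q * b = c := by
    rcases eq_or_lt_of_le hk with hk' | hk'
    · -- k = 2i+1, c = pell u (4i+2), multiple of a
      have h4 : 2 * i + k + 1 = 2 * i + (2 * i) + 1 + 1 := by omega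
      refine ⟨pell u (2*i+1+1) + pell u (2*i), 0, ?_⟩
      rw [hc, h4]
      have := pell_add u (2*i) (2*i+1)
      have h5 : 2*i + (2*i+1) + 1 = 2*i + 2*i + 1 + 1 := by ring
      rw [h5] at this
      rw [this, ha]
      ring
    · -- k ≥ 2i+2, c ≥ a*b > g
      have hcge : a * b ≤ c := by
        have h1 : a * b ≤ pell u (4*i+3) := by
          have := pell_add u (2*i) (2*i+2)
          have h5 : 2*i + (2*i+2) + 1 = 4*i+3 := by ring
          rw [h5] at this
          have h6 : 2*i + 2 + 1 = 2*i + 3 := by ring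
          rw [h6] at this
          rw [this]
          exact Nat.le_add_right _ _
        refine le_trans h1 (hmono ?_)
        omega
      by_contra hno
      push_neg at hno
      have : c ∈ {m : ℕ | ¬ ∃ x y : ℕ, x * a + y * b = m} := by
        simp only [Set.mem_setOf_eq]
        push_neg
        intro x y h
        exact hno x y h
      have := hpair.2 this
      omega
  obtain ⟨p, q, hpq⟩ := hrep
  refine ⟨g, ?_, hpair, ?_⟩
  · constructor
    · simp only [Set.mem_setOf_eq]
      rintro ⟨x, y, z, hxyz⟩
      apply hpair.1
      exact ⟨x + z * p, y + z * q, by rw [← hxyz, ← hpq]; ring⟩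
    · intro m hm
      apply hpair.2
      simp only [Set.mem_setOf_eq] at hm ⊢
      rintro ⟨x, y, hxy⟩
      exact hm ⟨x, y, 0, by omega⟩
  · rw [hg]
    have h7 : b ≤ a * b - a := by omega
    push_cast [Nat.cast_sub h7, Nat.cast_sub (le_trans (Nat.le_add_right a b) hab)]
    ring
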